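/- For the GLL distribution with p = 2, the cdf is F(x;θ,λ) = x^θ·[6 + 2θλ − θ log x·{6 + 2θλ − θ log x·(3 + θλ − θ log x)}]/(6 + 2θλ) for x ∈ (0,1). -/

import Mathlib

open Real MeasureTheory

/-- The GLL density with p = 2. -/
noncomputable def ll2 (θ lam x : ℝ) : ℝ :=
  θ ^ 4 / (6 + 2 * lam * θ) * (-Real.log x) ^ 2 * (lam - Real.log x) * x ^ (θ - 1)

/-- x^θ (log x)^k → 0 as x → 0⁺. -/
lemma rpow_mul_log_pow_tendsto {θ : ℝ} (hθ : 0 < θ) (k : ℕ) :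
    Filter.Tendsto (fun x : ℝ => x ^ θ * Real.log x ^ k) (nhdsWithin 0 (Set.Ioi 0)) (nhds 0) := by
  rcases Nat.eq_zero_or_pos k with hk | hk
  · subst hk
    simp only [pow_zero, mul_one]
    have : Filter.Tendsto (fun x : ℝ => x ^ θ) (nhds 0) (nhds ((0:ℝ) ^ θ)) :=
      (Real.continuousAt_rpow_const 0 θ (Or.inr hθ.le)).tendsto
    rw [Real.zero_rpow hθ.ne'] at this
    exact this.mono_left nhdsWithin_le_nhds
  · have hθk : (0:ℝ) < θ / k := div_pos hθ (by exact_mod_cast hk)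
    have h1 := tendsto_log_mul_rpow_nhdsGT_zero hθk
    have h2 : Filter.Tendsto (fun x : ℝ => (Real.log x * x ^ (θ / k)) ^ k)
        (nhdsWithin 0 (Set.Ioi 0)) (nhds ((0:ℝ) ^ k)) := h1.pow k
    rw [zero_pow hk.ne'] at h2
    refine h2.congr' ?_
    filter_upwards [self_mem_nhdsWithin] with x (hx : 0 < x)
    rw [mul_pow, ← Real.rpow_natCast (x ^ (θ / k)) k, ← Real.rpow_mul hx.le,
      div_mul_cancel₀ _ (by exact_mod_cast hk.ne' : (k:ℝ) ≠ 0)]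
    ring

theorem ll2_cdf (θ lam : ℝ) (hθ : 0 < θ) (hlam : 0 ≤ lam) (x : ℝ) (hx : x ∈ Set.Ioo (0:ℝ) 1) :
    ∫ t in Set.Ioo (0:ℝ) x, ll2 θ lam t =
      x ^ θ * (6 + 2 * θ * lam - θ * Real.log x *
        (6 + 2 * θ * lam - θ * Real.log x * (3 + θ * lam - θ * Real.log x))) / (6 + 2 * θ * lam) := by
  obtain ⟨hx0, hx1⟩ := hx
  set c : ℝ := 6 + 2 * θ * lam with hc
  have hcpos : 0 < c := by positivity
  set F : ℝ → ℝ := fun t => t ^ θ * (6 + 2 * θ * lam - θ * Real.log t *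
      (6 + 2 * θ * lam - θ * Real.log t * (3 + θ * lam - θ * Real.log t))) / c with hFdef
  have hF0 : F 0 = 0 := by
    simp [hFdef, Real.zero_rpow hθ.ne']
  -- derivative
  have hderiv : ∀ t ∈ Set.Ioo (0:ℝ) x, HasDerivAt F (ll2 θ lam t) t := by
    intro t ht
    have ht0 : 0 < t := ht.1
    have hl : HasDerivAt Real.log t⁻¹ t := Real.hasDerivAt_log ht0.ne'
    have hp : HasDerivAt (fun s : ℝ => s ^ θ) (θ * t ^ (θ - 1)) t :=
      Real.hasDerivAt_rpow_const (Or.inl ht0.ne')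
    have h3 : HasDerivAt (fun s => 3 + θ * lam - θ * Real.log s) (-(θ * t⁻¹)) t := by
      exact ((hasDerivAt_const t (3 + θ * lam)).sub (hl.const_mul θ)).congr_deriv (by ring)
    have h2 : HasDerivAt (fun s => θ * Real.log s * (3 + θ * lam - θ * Real.log s))
        (θ * t⁻¹ * (3 + θ * lam - θ * Real.log t) + θ * Real.log t * -(θ * t⁻¹)) t :=
      (hl.const_mul θ).mul h3
    have h1 : HasDerivAt (fun s => 6 + 2 * θ * lam -
        θ * Real.log s * (3 + θ * lam - θ * Real.log s))
        (-(θ * t⁻¹ * (3 + θ * lam - θ * Real.log t) + θ * Real.log t * -(θ * t⁻¹))) t := by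
      exact ((hasDerivAt_const t (6 + 2 * θ * lam)).sub h2).congr_deriv (by ring)
    have hQ : HasDerivAt (fun s => 6 + 2 * θ * lam - θ * Real.log s *
        (6 + 2 * θ * lam - θ * Real.log s * (3 + θ * lam - θ * Real.log s)))
        (-(θ * t⁻¹ * (6 + 2 * θ * lam - θ * Real.log t * (3 + θ * lam - θ * Real.log t)) +
          θ * Real.log t *
            (-(θ * t⁻¹ * (3 + θ * lam - θ * Real.log t) + θ * Real.log t * -(θ * t⁻¹))))) t := by
      exact ((hasDerivAt_const t (6 + 2 * θ * lam)).sub ((hl.const_mul θ).mul h1)).congr_deriv (by ring)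
    have hFt : HasDerivAt F _ t := (hp.mul hQ).div_const c
    convert hFt using 1
    have hts : t ^ (θ - 1) = t ^ θ * t⁻¹ := by
      rw [Real.rpow_sub ht0, Real.rpow_one, div_eq_mul_inv]
    rw [ll2.eq_1, hts]
    have hc' : (6 : ℝ) + 2 * lam * θ = c := by rw [hc]; ring
    rw [hc']
    field_simp
    ring
  -- nonnegativity of the density on (0, x)
  have hpos : ∀ t ∈ Set.Ioo (0:ℝ) x, 0 ≤ ll2 θ lam t := by
    intro t ht
    have ht0 : 0 < t := ht.1
    have hlt : Real.log t < 0 := Real.log_neg ht0 (ht.2.trans hx1)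
    have h2 : (0:ℝ) ≤ lam - Real.log t := by linarith
    rw [ll2.eq_1]
    have h3 : (0:ℝ) < t ^ (θ - 1) := Real.rpow_pos_of_pos ht0 _
    positivity
  -- continuity of F on [0, x]
  have hcont : ContinuousOn F (Set.Icc 0 x) := by
    intro t ht
    rcases eq_or_lt_of_le ht.1 with rfl | ht0
    · rw [ContinuousWithinAt, hF0]
      have key : Filter.Tendsto F (nhdsWithin 0 (Set.Ioi 0)) (nhds 0) := by
        have h0 := rpow_mul_log_pow_tendsto hθ 0
        have h1 := rpow_mul_log_pow_tendsto hθ 1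
        have h2 := rpow_mul_log_pow_tendsto hθ 2
        have h3 := rpow_mul_log_pow_tendsto hθ 3
        have hsum : Filter.Tendsto (fun t : ℝ =>
            ((6 + 2 * θ * lam) * (t ^ θ * Real.log t ^ 0)
              + (-(θ * (6 + 2 * θ * lam))) * (t ^ θ * Real.log t ^ 1)
              + (θ ^ 2 * (3 + θ * lam)) * (t ^ θ * Real.log t ^ 2)
              + (-(θ ^ 3)) * (t ^ θ * Real.log t ^ 3)) / c)
            (nhdsWithin 0 (Set.Ioi 0)) (nhds 0) := by
          have := ((((h0.const_mul (6 + 2 * θ * lam)).add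
            (h1.const_mul (-(θ * (6 + 2 * θ * lam))))).add
            (h2.const_mul (θ ^ 2 * (3 + θ * lam)))).add
            (h3.const_mul (-(θ ^ 3)))).div_const c
          simpa using this
        refine hsum.congr fun t => ?_
        rw [hFdef]
        ring
      have hmono : nhdsWithin (0:ℝ) (Set.Icc 0 x) ≤ nhdsWithin 0 (Set.Ici 0) :=
        nhdsWithin_mono _ Set.Icc_subset_Ici_self
      refine Filter.Tendsto.mono_left ?_ hmono
      have : Set.Ici (0:ℝ) = insert 0 (Set.Ioi 0) := Set.Ioi_insert.symm
      rw [this, nhdsWithin_insert]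
      rw [Filter.tendsto_sup]
      refine ⟨?_, key⟩
      simpa [hF0] using (tendsto_pure_nhds F (0:ℝ))
    · refine ContinuousAt.continuousWithinAt ?_
      have hlog : ContinuousAt Real.log t := Real.continuousAt_log ht0.ne'
      have hr : ContinuousAt (fun s : ℝ => s ^ θ) t :=
        Real.continuousAt_rpow_const t θ (Or.inl ht0.ne')
      exact (hr.mul ((continuousAt_const.sub (((hlog.const_mul θ)).mul
        (continuousAt_const.sub (((hlog.const_mul θ)).mul
          (continuousAt_const.sub (hlog.const_mul θ)))))))).div_const c
  -- integrability
  have hint : IntervalIntegrable (ll2 θ lam) volume 0 x := by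
    refine intervalIntegral.intervalIntegrable_deriv_of_nonneg (g := F) ?_ ?_ ?_
    · rwa [Set.uIcc_of_le hx0.le]
    · rwa [min_eq_left hx0.le, max_eq_right hx0.le]
    · rwa [min_eq_left hx0.le, max_eq_right hx0.le]
  have key := intervalIntegral.integral_eq_sub_of_hasDerivAt_of_le hx0.le hcont hderiv hint
  rw [← MeasureTheory.integral_Ioc_eq_integral_Ioo, ← intervalIntegral.integral_of_le hx0.le,
    key, hF0, sub_zero]
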